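/- Let C be an n×n correlation matrix with eigenvalues λ₁ ≥ ... ≥ λₙ, orthonormal eigenbasis v₁,...,vₙ, and weights w_j = ⟨v_j,δ_n⟩². If w₁ ≤ 1/2, then g_n(c) ≤ 1/2 and g_n(c)² ≤ (1/2)·g_n(c²+σ²). -/

import Mathlib

open Matrix

lemma tri_split {n : ℕ} (f : Fin n → Fin n → ℝ) (hsym : ∀ i j, f i j = f j i) :
    ∑ i, ∑ j, f i j =
      (∑ i, f i i) + 2 * ∑ i, ∑ j ∈ Finset.univ.filter (fun j => j < i), f i j := by
  classical
  have hswap : ∑ i, ∑ j ∈ Finset.univ.filter (fun j => i < j), f i j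
      = ∑ i, ∑ j ∈ Finset.univ.filter (fun j => j < i), f i j := by
    rw [Finset.sum_comm' (s' := fun j => Finset.univ.filter (fun i => i < j))
      (t' := Finset.univ) (fun i j => by simp)]
    exact Finset.sum_congr rfl fun i _ => Finset.sum_congr rfl fun j _ => hsym j i
  have hrow : ∀ i : Fin n, ∑ j, f i j = f i i
      + (∑ j ∈ Finset.univ.filter (fun j => j < i), f i j
        + ∑ j ∈ Finset.univ.filter (fun j => i < j), f i j) := by
    intro i
    have h1 : (Finset.univ : Finset (Fin n)) =
        insert i ((Finset.univ.filter (fun j => j < i)) ∪ (Finset.univ.filter (fun j => i < j))) := by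
      ext j
      simp only [Finset.mem_insert, Finset.mem_union, Finset.mem_filter, Finset.mem_univ,
        true_and, true_iff]
      rcases lt_trichotomy j i with h | h | h
      · exact Or.inr (Or.inl h)
      · exact Or.inl h
      · exact Or.inr (Or.inr h)
    have hdisj : Disjoint (Finset.univ.filter (fun j => j < i))
        (Finset.univ.filter (fun j => i < j)) := by
      rw [Finset.disjoint_left]
      intro x hx1 hx2
      simp only [Finset.mem_filter, Finset.mem_univ, true_and] at hx1 hx2
      exact absurd (lt_trans hx1 hx2) (lt_irrefl x)
    have hnotmem : i ∉ (Finset.univ.filter (fun j => j < i))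
        ∪ (Finset.univ.filter (fun j => i < j)) := by simp
    conv_lhs => rw [h1]
    rw [Finset.sum_insert hnotmem, Finset.sum_union hdisj]
  calc ∑ i, ∑ j, f i j
      = ∑ i, (f i i + (∑ j ∈ Finset.univ.filter (fun j => j < i), f i j
        + ∑ j ∈ Finset.univ.filter (fun j => i < j), f i j)) :=
        Finset.sum_congr rfl fun i _ => hrow i
    _ = (∑ i, f i i) + ((∑ i, ∑ j ∈ Finset.univ.filter (fun j => j < i), f i j)
        + ∑ i, ∑ j ∈ Finset.univ.filter (fun j => i < j), f i j) := by
        rw [Finset.sum_add_distrib, Finset.sum_add_distrib]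
    _ = _ := by rw [hswap]; ring

lemma key_half {n : ℕ} (hn : 2 ≤ n) (μ w : Fin n → ℝ) (hμ0 : ∀ j, 0 ≤ μ j)
    (hmono : ∀ i j : Fin n, i ≤ j → μ j ≤ μ i) (hw : ∀ j, 0 ≤ w j)
    (hsum : ∑ j, w j = 1) (hw0 : w ⟨0, Nat.lt_of_lt_of_le (Nat.zero_lt_succ 1) hn⟩ ≤ 1 / 2) :
    ∑ j, μ j * w j ≤ (1 / 2) * ∑ j, μ j := by
  classical
  set i0 : Fin n := ⟨0, by omega⟩ with hi0
  set i1 : Fin n := ⟨1, by omega⟩ with hi1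
  have hne : i1 ≠ i0 := by simp [hi0, hi1, Fin.ext_iff]
  have h01 : μ i1 ≤ μ i0 := hmono i0 i1 (by simp [hi0, hi1, Fin.le_def])
  have hsplit : ∑ j, μ j * w j = μ i0 * w i0 + ∑ j ∈ Finset.univ.erase i0, μ j * w j :=
    (Finset.add_sum_erase _ _ (Finset.mem_univ i0)).symm
  have hwerase : ∑ j ∈ Finset.univ.erase i0, w j = 1 - w i0 := by
    have h := Finset.add_sum_erase Finset.univ w (Finset.mem_univ i0)
    rw [hsum] at h
    linarith
  have hbound : ∑ j ∈ Finset.univ.erase i0, μ j * w j ≤ μ i1 * (1 - w i0) := by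
    rw [← hwerase, Finset.mul_sum]
    apply Finset.sum_le_sum
    intro j hj
    have hj0 : j ≠ i0 := Finset.ne_of_mem_erase hj
    have h1j : i1 ≤ j := by
      have : j.val ≠ 0 := fun h => hj0 (Fin.ext h)
      simp only [Fin.le_def, hi1]
      omega
    exact mul_le_mul_of_nonneg_right (hmono i1 j h1j) (hw j)
  have hsum2 : μ i0 + μ i1 ≤ ∑ j, μ j := by
    have heq : μ i0 + (μ i1 + ∑ j ∈ (Finset.univ.erase i0).erase i1, μ j) = ∑ j, μ j := by
      rw [Finset.add_sum_erase _ _ (Finset.mem_erase.mpr ⟨hne, Finset.mem_univ i1⟩),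
        Finset.add_sum_erase _ _ (Finset.mem_univ i0)]
    have hpos : 0 ≤ ∑ j ∈ (Finset.univ.erase i0).erase i1, μ j :=
      Finset.sum_nonneg fun j _ => hμ0 j
    linarith
  have hw00 : 0 ≤ w i0 := hw i0
  nlinarith


/-- If `w₁ ≤ 1/2`, then `g_n(c) ≤ 1/2` and `g_n(c)² ≤ (1/2)·g_n(c²+σ²)`. -/
theorem stmt_14 (n : ℕ) (hn : 2 ≤ n) (C : Matrix (Fin n) (Fin n) ℝ)
    (hpsd : C.PosSemidef) (hdiag : ∀ i, C i i = 1)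
    (lam : Fin n → ℝ) (v : Fin n → (Fin n → ℝ))
    (heig : ∀ j, C.mulVec (v j) = lam j • v j)
    (horth : ∀ j k, ∑ i, v j i * v k i = if j = k then (1 : ℝ) else 0)
    (hmono : ∀ i j : Fin n, i ≤ j → lam j ≤ lam i)
    (hw1 : (∑ i, v ⟨0, by omega⟩ i * (Real.sqrt n)⁻¹) ^ 2 ≤ 1 / 2) :
    (((n : ℝ) - 1) *
        ((2 / ((n : ℝ) * ((n : ℝ) - 1))) *
          ∑ i : Fin n, ∑ j ∈ Finset.univ.filter (fun j => j < i), C i j) + 1) / (n : ℝ) ≤ 1 / 2 ∧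
    ((((n : ℝ) - 1) *
        ((2 / ((n : ℝ) * ((n : ℝ) - 1))) *
          ∑ i : Fin n, ∑ j ∈ Finset.univ.filter (fun j => j < i), C i j) + 1) / (n : ℝ)) ^ 2 ≤
      (1 / 2) * ((((n : ℝ) - 1) *
        ((2 / ((n : ℝ) * ((n : ℝ) - 1))) *
          ∑ i : Fin n, ∑ j ∈ Finset.univ.filter (fun j => j < i), C i j ^ 2) + 1) / (n : ℝ)) := by
  classical
  have hn2 : (2 : ℝ) ≤ (n : ℝ) := by exact_mod_cast hn
  have hn0 : (0 : ℝ) < (n : ℝ) := by linarith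
  have hne : (n : ℝ) ≠ 0 := ne_of_gt hn0
  have hne1 : (n : ℝ) - 1 ≠ 0 := by linarith
  set δ : ℝ := (Real.sqrt n)⁻¹ with hδ
  have hδδ : δ * δ = ((n : ℝ))⁻¹ := by
    rw [hδ, ← mul_inv, Real.mul_self_sqrt (le_of_lt hn0)]
  set V : Matrix (Fin n) (Fin n) ℝ := Matrix.of v with hV
  set D : Matrix (Fin n) (Fin n) ℝ := Matrix.diagonal lam with hD
  have hVVt : V * Vᵀ = 1 := by
    ext j k
    simp only [Matrix.mul_apply, Matrix.transpose_apply, Matrix.of_apply, Matrix.one_apply, hV]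
    exact horth j k
  have hVtV : Vᵀ * V = 1 := mul_eq_one_comm.mp hVVt
  have hCV : C * Vᵀ = Vᵀ * D := by
    ext i j
    have h := congrFun (heig j) i
    simp only [Matrix.mulVec, dotProduct, Pi.smul_apply, smul_eq_mul] at h
    rw [hD, Matrix.mul_diagonal, Matrix.mul_apply]
    simp only [Matrix.transpose_apply, Matrix.of_apply, hV]
    rw [h]
    ring
  have hCeq : C = Vᵀ * D * V := by
    calc C = C * (Vᵀ * V) := by rw [hVtV, Matrix.mul_one]
      _ = C * Vᵀ * V := by rw [Matrix.mul_assoc]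
      _ = Vᵀ * D * V := by rw [hCV]
  have htrC : Matrix.trace C = (n : ℝ) := by
    simp [Matrix.trace, Matrix.diag, hdiag]
  have hlamsum : ∑ j, lam j = (n : ℝ) := by
    have h : Matrix.trace (Vᵀ * D * V) = ∑ j, lam j := by
      rw [Matrix.trace_mul_cycle, hVVt, Matrix.one_mul, hD, Matrix.trace_diagonal]
    rw [← hCeq, htrC] at h
    exact h.symm
  have hsym : ∀ i k, C i k = C k i := by
    intro i k
    simpa using (hpsd.1.apply i k).symm
  have hCentry : ∀ i k, C i k = ∑ j, lam j * (v j i * v j k) := by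
    intro i k
    conv_lhs => rw [hCeq]
    rw [Matrix.mul_apply]
    refine Finset.sum_congr rfl fun j _ => ?_
    rw [hD, Matrix.mul_diagonal, Matrix.transpose_apply]
    simp only [Matrix.of_apply, hV]
    ring
  have hlamsq : ∑ i, ∑ k, (C i k) ^ 2 = ∑ j, (lam j) ^ 2 := by
    have hCC : C * C = Vᵀ * Matrix.diagonal (fun j => lam j * lam j) * V := by
      rw [hCeq]
      calc Vᵀ * D * V * (Vᵀ * D * V) = Vᵀ * D * (V * Vᵀ) * (D * V) := by
            simp only [Matrix.mul_assoc]
        _ = Vᵀ * (D * D) * V := by rw [hVVt, Matrix.mul_one]; simp only [Matrix.mul_assoc]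
        _ = Vᵀ * Matrix.diagonal (fun j => lam j * lam j) * V := by
            rw [hD, Matrix.diagonal_mul_diagonal]
    have h1 : Matrix.trace (C * C) = ∑ j, lam j * lam j := by
      rw [hCC, Matrix.trace_mul_cycle, hVVt, Matrix.one_mul, Matrix.trace_diagonal]
    have h2 : Matrix.trace (C * C) = ∑ i, ∑ k, (C i k) ^ 2 := by
      simp only [Matrix.trace, Matrix.diag, Matrix.mul_apply]
      exact Finset.sum_congr rfl fun i _ => Finset.sum_congr rfl fun k _ => by
        rw [← hsym i k]; ring
    rw [← h2, h1]
    exact Finset.sum_congr rfl fun j _ => (sq (lam j)).symm ▸ by ring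
  have hlam0 : ∀ j, 0 ≤ lam j := by
    intro j
    have h := hpsd.dotProduct_mulVec_nonneg (v j)
    rw [heig j] at h
    have h2 : ∑ i, v j i * (lam j * v j i) = lam j := by
      have h3 : ∑ i, v j i * (lam j * v j i) = lam j * ∑ i, v j i * v j i := by
        rw [Finset.mul_sum]
        exact Finset.sum_congr rfl fun i _ => by ring
      rw [h3, horth j j]
      simp
    simp only [dotProduct, Pi.star_apply, star_trivial, Pi.smul_apply,
      smul_eq_mul] at h
    rw [h2] at h
    exact h
  have hdual : ∀ i k, ∑ j, v j i * v j k = if i = k then (1 : ℝ) else 0 := by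
    intro i k
    have h := congrFun (congrFun hVtV i) k
    simpa [Matrix.mul_apply, Matrix.transpose_apply, Matrix.of_apply, Matrix.one_apply, hV]
      using h
  set a : Fin n → ℝ := fun j => ∑ i, v j i * δ with ha
  have hexch : ∀ (m : Fin n → ℝ), ∑ j, m j * ((∑ i, v j i * δ) * (∑ k, v j k * δ))
      = ∑ i, ∑ k, (δ * δ) * (∑ j, m j * (v j i * v j k)) := by
    intro m
    have step : ∀ j, m j * ((∑ i, v j i * δ) * (∑ k, v j k * δ))
        = ∑ i, ∑ k, (δ * δ) * (m j * (v j i * v j k)) := by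
      intro j
      rw [Finset.sum_mul_sum, Finset.mul_sum]
      refine Finset.sum_congr rfl fun i _ => ?_
      rw [Finset.mul_sum]
      exact Finset.sum_congr rfl fun k _ => by ring
    calc ∑ j, m j * ((∑ i, v j i * δ) * (∑ k, v j k * δ))
        = ∑ j, ∑ i, ∑ k, (δ * δ) * (m j * (v j i * v j k)) :=
          Finset.sum_congr rfl fun j _ => step j
      _ = ∑ i, ∑ j, ∑ k, (δ * δ) * (m j * (v j i * v j k)) := Finset.sum_comm
      _ = ∑ i, ∑ k, ∑ j, (δ * δ) * (m j * (v j i * v j k)) :=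
          Finset.sum_congr rfl fun i _ => Finset.sum_comm
      _ = ∑ i, ∑ k, (δ * δ) * ∑ j, m j * (v j i * v j k) := by
          refine Finset.sum_congr rfl fun i _ => Finset.sum_congr rfl fun k _ => ?_
          rw [Finset.mul_sum]
  have hasum : ∑ j, a j ^ 2 = 1 := by
    have h := hexch (fun _ => 1)
    simp only [one_mul] at h
    calc ∑ j, a j ^ 2 = ∑ j, ((∑ i, v j i * δ) * (∑ k, v j k * δ)) :=
          Finset.sum_congr rfl fun j _ => by rw [ha, sq]
      _ = ∑ i, ∑ k, (δ * δ) * (∑ j, v j i * v j k) := h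
      _ = ∑ i : Fin n, (δ * δ) := by
          refine Finset.sum_congr rfl fun i _ => ?_
          simp [hdual]
      _ = 1 := by
          rw [Finset.sum_const, Finset.card_univ, Fintype.card_fin, nsmul_eq_mul, hδδ]
          field_simp
  have hT : ∑ j, lam j * a j ^ 2 = ((n : ℝ))⁻¹ * (∑ i, ∑ k, C i k) := by
    have h := hexch lam
    calc ∑ j, lam j * a j ^ 2
        = ∑ j, lam j * ((∑ i, v j i * δ) * (∑ k, v j k * δ)) :=
          Finset.sum_congr rfl fun j _ => by rw [ha, sq]
      _ = ∑ i, ∑ k, (δ * δ) * (∑ j, lam j * (v j i * v j k)) := h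
      _ = ∑ i, ∑ k, ((n : ℝ))⁻¹ * C i k := by
          refine Finset.sum_congr rfl fun i _ => Finset.sum_congr rfl fun k _ => ?_
          rw [hδδ, ← hCentry i k]
      _ = ((n : ℝ))⁻¹ * (∑ i, ∑ k, C i k) := by
          rw [Finset.mul_sum]
          exact Finset.sum_congr rfl fun i _ => (Finset.mul_sum _ _ _).symm
  set L1 : ℝ := ∑ i : Fin n, ∑ j ∈ Finset.univ.filter (fun j => j < i), C i j with hL1
  set L2 : ℝ := ∑ i : Fin n, ∑ j ∈ Finset.univ.filter (fun j => j < i), C i j ^ 2 with hL2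
  have hS1 : ∑ i, ∑ k, C i k = (n : ℝ) + 2 * L1 := by
    rw [tri_split C hsym]
    simp [hdiag]
    rfl
  have hS2 : ∑ j, (lam j) ^ 2 = (n : ℝ) + 2 * L2 := by
    rw [← hlamsq, tri_split (fun i k => C i k ^ 2) (fun i k => by
      show C i k ^ 2 = C k i ^ 2
      rw [hsym i k])]
    simp [hdiag]
    rfl
  set T : ℝ := ∑ j, lam j * a j ^ 2 with hTdef
  have hTS : (n : ℝ) * T = (n : ℝ) + 2 * L1 := by
    rw [hT, hS1, ← mul_assoc, mul_inv_cancel₀ hne, one_mul]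
  have hw0 : a ⟨0, by omega⟩ ^ 2 ≤ 1 / 2 := hw1
  have hwpos : ∀ j, 0 ≤ a j ^ 2 := fun j => sq_nonneg _
  have hKey1 : T ≤ (1 / 2) * ∑ j, lam j :=
    key_half hn lam (fun j => a j ^ 2) hlam0 hmono hwpos hasum hw0
  rw [hlamsum] at hKey1
  have hmono2 : ∀ i j : Fin n, i ≤ j → lam j ^ 2 ≤ lam i ^ 2 := fun i j h =>
    pow_le_pow_left₀ (hlam0 j) (hmono i j h) 2
  have hKey2 : ∑ j, lam j ^ 2 * a j ^ 2 ≤ (1 / 2) * ∑ j, lam j ^ 2 :=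
    key_half hn (fun j => lam j ^ 2) (fun j => a j ^ 2) (fun j => sq_nonneg _) hmono2
      hwpos hasum hw0
  have hCS : T ^ 2 ≤ ∑ j, lam j ^ 2 * a j ^ 2 := by
    have h := Finset.sum_mul_sq_le_sq_mul_sq Finset.univ a (fun j => lam j * a j)
    have e1 : ∑ j, a j * (lam j * a j) = T := by
      rw [hTdef]
      exact Finset.sum_congr rfl fun j _ => by rw [sq]; ring
    have e2 : ∑ j, (lam j * a j) ^ 2 = ∑ j, lam j ^ 2 * a j ^ 2 :=
      Finset.sum_congr rfl fun j _ => by ring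
    rw [e1, hasum, one_mul, e2] at h
    exact h
  have hT2 : T ^ 2 ≤ (1 / 2) * ((n : ℝ) + 2 * L2) := by
    rw [← hS2]
    exact hCS.trans hKey2
  have hval1 : (((n : ℝ) - 1) * ((2 / ((n : ℝ) * ((n : ℝ) - 1))) * L1) + 1) / (n : ℝ)
      = ((n : ℝ) + 2 * L1) / (n : ℝ) ^ 2 := by
    field_simp
    ring
  have hval2 : (((n : ℝ) - 1) * ((2 / ((n : ℝ) * ((n : ℝ) - 1))) * L2) + 1) / (n : ℝ)
      = ((n : ℝ) + 2 * L2) / (n : ℝ) ^ 2 := by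
    field_simp
    ring
  have hn2pos : (0 : ℝ) < (n : ℝ) ^ 2 := by positivity
  constructor
  · rw [hval1, ← hTS]
    rw [div_le_iff₀ hn2pos]
    nlinarith
  · rw [hval1, hval2, ← hTS]
    have e : ((n : ℝ) * T / (n : ℝ) ^ 2) ^ 2 = T ^ 2 / (n : ℝ) ^ 2 := by
      field_simp
    rw [e]
    calc T ^ 2 / (n : ℝ) ^ 2 ≤ ((1 / 2) * ((n : ℝ) + 2 * L2)) / (n : ℝ) ^ 2 :=
          (div_le_div_iff_of_pos_right hn2pos).mpr hT2
      _ = 1 / 2 * (((n : ℝ) + 2 * L2) / (n : ℝ) ^ 2) := by ring
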